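/- (Laplace Mechanism, Theorem 2.) Let ε > 0, Δ > 0, d ≥ 1, and q, q' ∈ ℝ^d with ‖q − q'‖₁ ≤ Δ. Set λ = Δ/ε, and let μ_q and μ_{q'} be the d-dimensional i.i.d. Laplace measures with scale λ centered at q and q', respectively. Then for every measurable set S ⊆ ℝ^d, μ_q(S) ≤ exp(ε) · μ_{q'}(S). -/

import Mathlib

open MeasureTheory

/-- The `d`-dimensional i.i.d. Laplace measure with center `q` and scale `lam`. -/
noncomputable def laplaceMeasure (d : ℕ) (lam : ℝ) (q : Fin d → ℝ) :
    Measure (Fin d → ℝ) :=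
  volume.withDensity fun x =>
    ENNReal.ofReal (∏ i : Fin d, (1 / (2 * lam)) * Real.exp (-|x i - q i| / lam))

/-- Laplace Mechanism (Theorem 2): with scale `Δ/ε`, the output distributions
on two query answers at ℓ1-distance at most `Δ` differ by at most `exp ε`. -/
theorem laplace_mechanism_dp
    (ε Δ : ℝ) (hε : 0 < ε) (hΔ : 0 < Δ)
    (d : ℕ) (hd : 1 ≤ d) (q q' : Fin d → ℝ)
    (hq : (∑ i : Fin d, |q i - q' i|) ≤ Δ)
    (S : Set (Fin d → ℝ)) (hS : MeasurableSet S) :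
    laplaceMeasure d (Δ / ε) q S
      ≤ ENNReal.ofReal (Real.exp ε) * laplaceMeasure d (Δ / ε) q' S := by
  set lam := Δ / ε with hlam
  have hlam0 : 0 < lam := div_pos hΔ hε
  have key : ∀ x : Fin d → ℝ,
      (∏ i : Fin d, (1 / (2 * lam)) * Real.exp (-|x i - q i| / lam))
        ≤ Real.exp ε * ∏ i : Fin d, (1 / (2 * lam)) * Real.exp (-|x i - q' i| / lam) := by
    intro x
    have hprod : ∀ p : Fin d → ℝ,
        (∏ i : Fin d, (1 / (2 * lam)) * Real.exp (-|x i - p i| / lam))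
          = (1 / (2 * lam)) ^ d * Real.exp (∑ i : Fin d, -|x i - p i| / lam) := by
      intro p
      rw [Finset.prod_mul_distrib, Finset.prod_const, Real.exp_sum, Finset.card_univ,
        Fintype.card_fin]
    rw [hprod, hprod, mul_left_comm, ← Real.exp_add]
    apply mul_le_mul_of_nonneg_left _ (by positivity)
    apply Real.exp_le_exp.mpr
    have hsum : (∑ i : Fin d, -|x i - q i| / lam) - (∑ i : Fin d, -|x i - q' i| / lam)
        ≤ ε := by
      rw [← Finset.sum_sub_distrib]
      have hterm : ∀ i : Fin d,
          -|x i - q i| / lam - -|x i - q' i| / lam ≤ |q i - q' i| / lam := by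
        intro i
        rw [div_sub_div_same, div_le_div_iff_of_pos_right hlam0]
        have := abs_sub_abs_le_abs_sub (x i - q' i) (x i - q i)
        have h2 : (x i - q' i) - (x i - q i) = q i - q' i := by ring
        rw [h2] at this
        linarith
      calc (∑ i : Fin d, (-|x i - q i| / lam - -|x i - q' i| / lam))
          ≤ ∑ i : Fin d, |q i - q' i| / lam := Finset.sum_le_sum fun i _ => hterm i
        _ = (∑ i : Fin d, |q i - q' i|) / lam := by rw [Finset.sum_div]
        _ ≤ Δ / lam := by
            gcongr
        _ = ε := by field_simp [hlam, ne_of_gt hε]; rw [hlam, div_mul_cancel₀ Δ (ne_of_gt hε)]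
    linarith
  have hc : ENNReal.ofReal (Real.exp ε) ≠ ⊤ := ENNReal.ofReal_ne_top
  rw [laplaceMeasure, laplaceMeasure, withDensity_apply _ hS, withDensity_apply _ hS,
    ← lintegral_const_mul' _ _ hc]
  apply lintegral_mono
  intro x
  dsimp only
  rw [← ENNReal.ofReal_mul (Real.exp_nonneg ε)]
  exact ENNReal.ofReal_le_ofReal (key x)
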